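/- Let σ, μ ∈ ℝ satisfy e^{2πμ} > sinh²(2πσ), set t₀ := (1/(2π))·Log(−cosh(2πσ) − i√(e^{2πμ} − sinh²(2πσ))), g(t₀) := e^{π(t₀−μ)}, and A := −2πi·( sinh(2πt₀)/(cosh(2πσ) + cosh(2πt₀)) + 1 ). Then e^{3πi/4}·g(t₀)·√(2π)/√(−A) = e^{πi/4}/(√2·(e^{2πμ} − sinh²(2πσ))^{1/4}), where √(−A) is the principal branch square root and (e^{2πμ} − sinh²(2πσ))^{1/4} is the positive real fourth root. -/

import Mathlib

open MeasureTheory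

noncomputable section

/-- The dilogarithm `Li₂(z) = -∫₀¹ Log(1 - t z) dt / t` (principal branch of `Log`). -/
def Li2 (z : ℂ) : ℂ := -∫ t in (0:ℝ)..1, Complex.log (1 - (t:ℂ) * z) / (t:ℂ)

/-- Negative-index polylogarithms: `LiNeg m = Li_{-m}`, with `Li₀(w) = w/(1-w)` and
`Li_{-m}(w) = w ⬝ d/dw Li_{-m+1}(w)`. -/
def LiNeg : ℕ → ℂ → ℂ
  | 0 => fun w => w / (1 - w)
  | (m+1) => fun w => w * deriv (LiNeg m) w

/-- `LiIdx n = Li_{2-2n}`: the dilogarithm for `n = 0`, and `Li_{-(2n-2)}` for `n ≥ 1`. -/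
def LiIdx (n : ℕ) : ℂ → ℂ := if n = 0 then Li2 else LiNeg (2*n - 2)

/-- `L_b(z) = i ∫₀^∞ ( sin(2yz)/(2 sinh(y/b) sinh(by)) - z/y ) dy/y`. -/
def Lb (b : ℝ) (z : ℂ) : ℂ :=
  Complex.I * ∫ y in Set.Ioi (0:ℝ),
    (Complex.sin (2 * (y:ℂ) * z) / (2 * (Real.sinh (y / b) : ℂ) * (Real.sinh (b * y) : ℂ))
      - z / (y:ℂ)) / (y:ℂ)

/-- Ruijsenaars' hyperbolic gamma function `s_b(z) = exp(L_b(z))`. -/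
def sb (b : ℝ) (z : ℂ) : ℂ := Complex.exp (Lb b z)

/-- `Q = b + b⁻¹` as a complex number. -/
def Qb (b : ℝ) : ℂ := (b:ℂ) + (b:ℂ)⁻¹

/-- The function `𝓜(b, ζ', ω')`, the contour being the horizontal line `Im = -Q/4`. -/
def Mfun (b : ℝ) (ζ : ℝ) (ω : ℂ) : ℂ :=
  sb b ζ * ∫ x : ℝ,
    Complex.exp (Complex.I * (Real.pi:ℂ) * ((x:ℂ) - Complex.I * Qb b / 4)
        * ((ζ:ℂ) - Complex.I * Qb b / 2 + 2 * ω)) *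
      sb b ((x:ℂ) - Complex.I * Qb b / 4 - (ζ:ℂ))
        / sb b ((x:ℂ) - Complex.I * Qb b / 4 + Complex.I * Qb b / 2)

/-- The exponent `f_𝓜(ζ, ω)`. -/
def fM (ζ : ℝ) (ω : ℂ) : ℂ :=
  -(Li2 (-Complex.exp (2 * (Real.pi:ℂ) * (ζ:ℂ)))
    + Li2 (-(Complex.exp (-((Real.pi:ℂ) * (ζ:ℂ))) * Complex.cosh ((Real.pi:ℂ) * ω)
        / Complex.sinh ((Real.pi:ℂ) * ((ζ:ℂ) + ω))))
    - Li2 (Complex.exp ((Real.pi:ℂ) * (ζ:ℂ)) * Complex.cosh ((Real.pi:ℂ) * ω)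
        / Complex.sinh ((Real.pi:ℂ) * ((ζ:ℂ) + ω))))
    / (2 * (Real.pi:ℂ) * Complex.I)
  + Complex.I * (Real.pi:ℂ) * (ζ:ℂ)^2
  + Complex.I * (ω - Complex.I / 2) *
      Complex.log (Complex.exp ((Real.pi:ℂ) * (ζ:ℂ)) * Complex.cosh ((Real.pi:ℂ) * ω)
        / Complex.sinh ((Real.pi:ℂ) * ((ζ:ℂ) + ω)))
  + Complex.I * (Real.pi:ℂ) / 6

/-- The function `𝓠(b, σ', μ')`, the contour being the horizontal line `Im = -3Q/8`. -/
def Qfun (b : ℝ) (σ μ : ℝ) : ℂ :=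
  Complex.exp (Complex.I * (Real.pi:ℂ) *
      (1/6 + 7 * (Qb b)^2 / 24 - (μ:ℂ)^2/2 + Complex.I * (μ:ℂ) * Qb b - (σ:ℂ)^2)) * sb b μ *
  ∫ x : ℝ,
    Complex.exp (-(Complex.I * (Real.pi:ℂ) * ((x:ℂ) - 3 * Complex.I * Qb b / 8)^2)) *
    Complex.exp (2 * Complex.I * (Real.pi:ℂ) * ((x:ℂ) - 3 * Complex.I * Qb b / 8)
      * ((μ:ℂ) - Complex.I * Qb b / 2)) *
    sb b ((x:ℂ) - 3 * Complex.I * Qb b / 8 + (σ:ℂ)) *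
    sb b ((x:ℂ) - 3 * Complex.I * Qb b / 8 - (σ:ℂ))

/-- The exponent `f_𝓠(σ, μ)`. -/
def fQ (σ μ : ℝ) : ℂ :=
  -(Li2 (-Complex.exp (2 * (Real.pi:ℂ) * (μ:ℂ)))) / (2 * (Real.pi:ℂ) * Complex.I)
  - Li2 (Complex.exp (-(2 * (Real.pi:ℂ) * (σ:ℂ))) *
      ((Real.cosh (2*Real.pi*σ) : ℂ) + Complex.I *
        (Real.sqrt (Real.exp (2*Real.pi*μ) - Real.sinh (2*Real.pi*σ)^2) : ℂ)))
    / (2 * (Real.pi:ℂ) * Complex.I)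
  - Li2 (Complex.exp (2 * (Real.pi:ℂ) * (σ:ℂ)) *
      ((Real.cosh (2*Real.pi*σ) : ℂ) + Complex.I *
        (Real.sqrt (Real.exp (2*Real.pi*μ) - Real.sinh (2*Real.pi*σ)^2) : ℂ)))
    / (2 * (Real.pi:ℂ) * Complex.I)
  + (1/2 + Complex.I * (μ:ℂ)) *
      Complex.log (-(Real.cosh (2*Real.pi*σ) : ℂ) - Complex.I *
        (Real.sqrt (Real.exp (2*Real.pi*μ) - Real.sinh (2*Real.pi*σ)^2) : ℂ))
  - (Real.pi:ℂ) * (μ:ℂ) + 5 * (Real.pi:ℂ) * Complex.I / 12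

/-- The phase function `f(t)` of the saddle point analysis of `𝓜`. -/
def fMt (ζ : ℝ) (ω t : ℂ) : ℂ :=
  -(Li2 (-Complex.exp (2*(Real.pi:ℂ)*(ζ:ℂ)))
    + Li2 (-Complex.exp (2*(Real.pi:ℂ)*(t-(ζ:ℂ))))
    - Li2 (-Complex.exp (2*(Real.pi:ℂ)*(t+Complex.I/2)))) / (2*(Real.pi:ℂ)*Complex.I)
  + Complex.I*(Real.pi:ℂ)*(ζ:ℂ)^2 + 2*Complex.I*(Real.pi:ℂ)*t*ω + (Real.pi:ℂ)*t
  + Complex.I*(Real.pi:ℂ)/6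

/-- The amplitude `g(t)` of the saddle point analysis of `𝓜`. -/
def gM (t : ℂ) : ℂ :=
  Complex.exp ((Real.pi:ℂ)*t - Complex.log (1 - Complex.exp (2*(Real.pi:ℂ)*t)) / 2)

/-- The error term `E(τ, t)` from the semiclassical analysis of `𝓜`. -/
def Efun (ζ τ : ℝ) (t : ℂ) : ℂ :=
  Complex.I * (Li2 (Complex.exp (2*(Real.pi:ℂ)*t))
      - Li2 (Complex.exp (Complex.I*(Real.pi:ℂ)*(τ:ℂ) + 2*(Real.pi:ℂ)*t))) / (2*(Real.pi:ℂ)*(τ:ℂ))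
  + Complex.log (1 - Complex.exp (2*(Real.pi:ℂ)*t)) / 2
  + (Complex.I*(Real.pi:ℂ)*(τ:ℂ)/12) *
      (Complex.exp (2*(Real.pi:ℂ)*t + Complex.I*(Real.pi:ℂ)*(τ:ℂ))
          / (Complex.exp (2*(Real.pi:ℂ)*t + Complex.I*(Real.pi:ℂ)*(τ:ℂ)) - 1)
        - Complex.exp (2*(Real.pi:ℂ)*(ζ:ℂ)) / (Complex.exp (2*(Real.pi:ℂ)*(ζ:ℂ)) + 1)
        - Complex.exp (2*(Real.pi:ℂ)*t)
          / (Complex.exp (2*(Real.pi:ℂ)*(ζ:ℂ)) + Complex.exp (2*(Real.pi:ℂ)*t)) + 2)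

/-- The phase function `f(t)` of the saddle point analysis of `𝓠`. -/
def fQt (σ μ : ℝ) (t : ℂ) : ℂ :=
  -(Li2 (-Complex.exp (2*(Real.pi:ℂ)*(μ:ℂ)))
    + Li2 (-Complex.exp (2*(Real.pi:ℂ)*(t-(σ:ℂ))))
    + Li2 (-Complex.exp (2*(Real.pi:ℂ)*(t+(σ:ℂ))))) / (2*(Real.pi:ℂ)*Complex.I)
  + 2*Complex.I*(Real.pi:ℂ)*(μ:ℂ)*t + (Real.pi:ℂ)*(t-(μ:ℂ)) + 5*Complex.I*(Real.pi:ℂ)/12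

/-- The amplitude `g(t)` of the saddle point analysis of `𝓠`. -/
def gQ (μ : ℝ) (t : ℂ) : ℂ := Complex.exp ((Real.pi:ℂ)*(t-(μ:ℂ)))

end

/-- simplification of the leading coefficient in the
semiclassical asymptotics of `𝓠`. -/
theorem Q_coefficient_simplification (σ μ : ℝ)
    (h : Real.sinh (2*Real.pi*σ)^2 < Real.exp (2*Real.pi*μ))
    (t₀ : ℂ)
    (ht₀ : t₀ = (1/(2*(Real.pi:ℂ))) *
      Complex.log (-(Real.cosh (2*Real.pi*σ) : ℂ) - Complex.I *
        (Real.sqrt (Real.exp (2*Real.pi*μ) - Real.sinh (2*Real.pi*σ)^2) : ℂ)))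
    (A : ℂ)
    (hA : A = -(2*(Real.pi:ℂ)*Complex.I) *
      (Complex.sinh (2*(Real.pi:ℂ)*t₀)
        / ((Real.cosh (2*Real.pi*σ) : ℂ) + Complex.cosh (2*(Real.pi:ℂ)*t₀)) + 1)) :
    Complex.exp (3*(Real.pi:ℂ)*Complex.I/4) * gQ μ t₀ * ((2*(Real.pi:ℂ)) ^ ((1:ℂ)/2))
        / ((-A) ^ ((1:ℂ)/2))
      = Complex.exp ((Real.pi:ℂ)*Complex.I/4) /
          ((Real.sqrt 2 : ℂ) *
            (((Real.exp (2*Real.pi*μ) - Real.sinh (2*Real.pi*σ)^2) ^ ((1:ℝ)/4) : ℝ) : ℂ)) := by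

  have hπ : (0:ℝ) < Real.pi := Real.pi_pos
  set s := Real.sinh (2*Real.pi*σ) with hs
  set c := Real.cosh (2*Real.pi*σ) with hcdef
  set E := Real.exp (2*Real.pi*μ) with hEdef
  set r := Real.sqrt (E - s^2) with hrdef
  have hE : 0 < E := Real.exp_pos _
  have hr : 0 < r := Real.sqrt_pos.2 (by linarith)
  have hrsq : r^2 = E - s^2 := Real.sq_sqrt (by linarith)
  have hcr : c^2 + r^2 = 1 + E := by
    have h2 := Real.cosh_sq (2*Real.pi*σ)
    rw [← hcdef, ← hs] at h2
    linarith
  set x : ℂ := (c:ℂ) + Complex.I * r with hxdef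
  have hxim : 0 < x.im := by simp [hxdef, hr]
  have hx0 : x ≠ 0 := fun h0 => by simp [h0] at hxim
  set W : ℂ := -(c:ℂ) - Complex.I * r with hWdef
  have hWx : W = -x := by rw [hWdef, hxdef]; ring
  have hW0 : W ≠ 0 := by rw [hWx]; exact neg_ne_zero.2 hx0
  have h2t : 2*(Real.pi:ℂ)*t₀ = Complex.log W := by
    have hπc : (2*(Real.pi:ℂ)) ≠ 0 := by
      simp [Complex.ofReal_ne_zero, Real.pi_ne_zero]
    rw [ht₀]; field_simp
  have hexp2t : Complex.exp (2*(Real.pi:ℂ)*t₀) = W := by rw [h2t]; exact Complex.exp_log hW0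
  have hlogW : Complex.log W = Complex.log x - (Real.pi:ℂ) * Complex.I := by
    rw [hWx]
    apply Complex.ext
    · simp [Complex.log_re]
    · simp [Complex.log_im, Complex.arg_neg_eq_arg_sub_pi_of_im_pos hxim]
  have h1E : ((1:ℂ) + E) ≠ 0 := by
    have h1 : (0:ℝ) < 1 + E := by linarith
    exact_mod_cast (by exact_mod_cast h1.ne' : ((1+E:ℝ):ℂ) ≠ 0)
  have hcrC : ((c:ℂ))^2 + ((r:ℂ))^2 = 1 + (E:ℂ) := by exact_mod_cast congrArg (Complex.ofReal) hcr
  have hmul : W * (-(c:ℂ) + Complex.I * r) = 1 + E := by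
    rw [hWdef]; linear_combination hcrC - (r:ℂ)^2 * Complex.I_sq
  have hWinv : W⁻¹ = (-(c:ℂ) + Complex.I * r) / (1 + E) := by
    rw [eq_div_iff h1E, ← hmul, inv_mul_cancel_left₀ hW0]
  have hexpneg : Complex.exp (-(2*(Real.pi:ℂ)*t₀)) = W⁻¹ := by
    rw [Complex.exp_neg, hexp2t]
  have hcosh : Complex.cosh (2*(Real.pi:ℂ)*t₀) = (W + W⁻¹)/2 := by
    simp only [Complex.cosh, hexp2t, hexpneg]
  have hsinh : Complex.sinh (2*(Real.pi:ℂ)*t₀) = (W - W⁻¹)/2 := by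
    simp only [Complex.sinh, hexp2t, hexpneg]
  have hEne : ((E:ℝ):ℂ) ≠ 0 := by exact_mod_cast hE.ne'
  have hxbar : ((c:ℂ)) - Complex.I * r ≠ 0 := by
    intro h0
    have him : ((c:ℂ) - Complex.I*r).im = -r := by simp
    rw [h0] at him
    simp at him
    linarith
  have hD : (c:ℂ) + Complex.cosh (2*(Real.pi:ℂ)*t₀) = (E:ℂ) * ((c:ℂ) - Complex.I*r) / (2*(1+E)) := by
    rw [hcosh, hWinv, hWdef]
    field_simp
    ring
  have hDne : (c:ℂ) + Complex.cosh (2*(Real.pi:ℂ)*t₀) ≠ 0 := by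
    rw [hD]
    apply div_ne_zero (mul_ne_zero hEne hxbar)
    exact mul_ne_zero two_ne_zero h1E
  have hA2 : (Complex.sinh (2*(Real.pi:ℂ)*t₀)
        / ((c:ℂ) + Complex.cosh (2*(Real.pi:ℂ)*t₀)) + 1)
      = -2*Complex.I*r*(1+E) / ((E:ℂ) * ((c:ℂ) - Complex.I*r)) := by
    rw [div_add' _ _ _ hDne, hD, hsinh, hWinv, hWdef]
    rw [div_eq_div_iff (hD ▸ hDne) (mul_ne_zero hEne hxbar)]
    field_simp
    ring
  set q : ℝ := 4*Real.pi*r/E with hqdef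
  have hq : 0 < q := by positivity
  have hAx : -A = ((q:ℝ):ℂ) * x := by
    rw [hA, hA2, hqdef, hxdef]
    push_cast
    field_simp
    linear_combination (-4*(r:ℂ)) * hcrC + (4*(r:ℂ)^3 - 4*(r:ℂ)*(1+(E:ℂ))) * Complex.I_sq
  have hAne : -A ≠ 0 := by
    rw [hAx]
    exact mul_ne_zero (by exact_mod_cast hq.ne') hx0
  have hpow1 : (-A) ^ ((1:ℂ)/2) = Complex.exp ((Real.log q : ℂ)/2 + Complex.log x/2) := by
    rw [Complex.cpow_def_of_ne_zero hAne, hAx, Complex.log_ofReal_mul hq hx0]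
    ring_nf
  have h2πpos : (0:ℝ) < 2*Real.pi := by linarith
  have hpow2 : (2*(Real.pi:ℂ)) ^ ((1:ℂ)/2) = Complex.exp ((Real.log (2*Real.pi) : ℂ)/2) := by
    have hcast : (2*(Real.pi:ℂ)) = ((2*Real.pi:ℝ):ℂ) := by push_cast; ring
    rw [hcast, Complex.cpow_def_of_ne_zero (by exact_mod_cast h2πpos.ne'),
      ← Complex.ofReal_log h2πpos.le]
    ring_nf
  have hgQ : gQ μ t₀
      = Complex.exp (Complex.log x/2 - (Real.pi:ℂ)*Complex.I/2 - (Real.pi:ℂ)*μ) := by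
    rw [gQ]
    congr 1
    have hexpo : (Real.pi:ℂ)*(t₀ - μ) = (2*(Real.pi:ℂ)*t₀)/2 - (Real.pi:ℂ)*μ := by ring
    rw [hexpo, h2t, hlogW]
    ring
  rw [hgQ, hpow2, hpow1, ← Complex.exp_add, ← Complex.exp_add, ← Complex.exp_sub]
  have hsplit : Complex.log x / 2 - ↑Real.pi * Complex.I / 2 - ↑Real.pi * ↑μ
        + (Real.log (2*Real.pi) : ℂ)/2
        + 3*(Real.pi:ℂ)*Complex.I/4
        - ((Real.log q : ℂ)/2 + Complex.log x/2)
      = (Real.pi:ℂ)*Complex.I/4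
        + ((-Real.pi*μ + (Real.log (2*Real.pi) - Real.log q)/2 : ℝ) : ℂ) := by
    push_cast
    ring
  rw [show Complex.log x / 2 - ↑Real.pi * Complex.I / 2 - ↑Real.pi * ↑μ
        + (Real.log (2*Real.pi) : ℂ)/2
        + 3*(Real.pi:ℂ)*Complex.I/4
        - ((Real.log q : ℂ)/2 + Complex.log x/2) = 3 * ↑Real.pi * Complex.I / 4 +
      (Complex.log x / 2 - ↑↑Real.pi * Complex.I / 2 - ↑↑Real.pi * ↑μ) +
      ↑(Real.log (2 * Real.pi)) / 2 - (↑(Real.log q) / 2 + Complex.log x / 2) from by ring] at hsplit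
  rw [hsplit, Complex.exp_add, ← Complex.ofReal_exp]
  have hreal : Real.exp (-Real.pi*μ + (Real.log (2*Real.pi) - Real.log q)/2)
      = 1 / (Real.sqrt 2 * ((E - s^2) ^ ((1:ℝ)/4))) := by
    have h4 : (E - s^2) ^ ((1:ℝ)/4) = Real.exp (Real.log r * (1/2)) := by
      rw [← hrsq, ← Real.rpow_natCast r 2, ← Real.rpow_mul hr.le,
        ← Real.rpow_def_of_pos hr]
      norm_num
    have h2 : Real.sqrt 2 = Real.exp (Real.log 2 * (1/2)) := by
      rw [Real.sqrt_eq_rpow, Real.rpow_def_of_pos (by norm_num)]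
    rw [h4, h2, ← Real.exp_add, one_div, ← Real.exp_neg]
    congr 1
    have hlq : Real.log q = Real.log (4*Real.pi) + Real.log r - Real.log E := by
      rw [hqdef, Real.log_div (by positivity) hE.ne', Real.log_mul (by positivity) hr.ne']
    have hlE : Real.log E = 2*Real.pi*μ := Real.log_exp _
    have hl4 : Real.log (4*Real.pi) = Real.log 2 + Real.log (2*Real.pi) := by
      rw [show (4*Real.pi) = 2*(2*Real.pi) by ring, Real.log_mul (by norm_num) h2πpos.ne']
    rw [hlq, hlE, hl4]
    ring
  rw [hreal]
  push_cast
  ring
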